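/- (Lemma 4, second part.) Let κ > 0, let σ satisfy 0 < σ ≤ 1, and let z ∈ ℝ. If κ ≤ σ·τ(z), then τ(−z) ≤ 1 + √C, where C = log(1/(2πκ²)). -/
import Mathlib


open Real MeasureTheory Filter

/-- The standard normal probability density function φ. -/
noncomputable def stdNormalPDF (z : ℝ) : ℝ := (Real.sqrt (2 * Real.pi))⁻¹ * Real.exp (-z ^ 2 / 2)

/-- The standard normal cumulative distribution function Φ. -/
noncomputable def stdNormalCDF (z : ℝ) : ℝ := ∫ t in Set.Iic z, stdNormalPDF t

/-- τ(z) = z Φ(z) + φ(z). -/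
noncomputable def tau (z : ℝ) : ℝ := z * stdNormalCDF z + stdNormalPDF z

lemma sqrt2pi_pos : 0 < Real.sqrt (2 * Real.pi) := Real.sqrt_pos.2 (by positivity)

lemma one_le_sqrt2pi : 1 ≤ Real.sqrt (2 * Real.pi) := by
  rw [show (1:ℝ) = Real.sqrt 1 by simp]
  exact Real.sqrt_le_sqrt (by nlinarith [Real.pi_gt_three])

lemma pdf_nonneg (z : ℝ) : 0 ≤ stdNormalPDF z := by
  unfold stdNormalPDF; positivity

lemma pdf_le (z : ℝ) : stdNormalPDF z ≤ (Real.sqrt (2 * Real.pi))⁻¹ := by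
  unfold stdNormalPDF
  have : Real.exp (-z ^ 2 / 2) ≤ 1 := Real.exp_le_one_iff.2 (by nlinarith [sq_nonneg z])
  nlinarith [sqrt2pi_pos, inv_pos.2 sqrt2pi_pos]

lemma pdf_le_one (z : ℝ) : stdNormalPDF z ≤ 1 :=
  (pdf_le z).trans (by rw [inv_le_one_iff₀]; right; exact one_le_sqrt2pi)

lemma integrable_pdf : Integrable stdNormalPDF := by
  have h : Integrable (fun x : ℝ => Real.exp (-(1/2) * x ^ 2)) :=
    integrable_exp_neg_mul_sq (by norm_num)
  have := h.const_mul (Real.sqrt (2 * Real.pi))⁻¹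
  refine this.congr (by filter_upwards with x; unfold stdNormalPDF; ring_nf)

lemma cdf_nonneg (z : ℝ) : 0 ≤ stdNormalCDF z :=
  setIntegral_nonneg measurableSet_Iic (fun t _ => pdf_nonneg t)

lemma integral_pdf : ∫ t, stdNormalPDF t = 1 := by
  unfold stdNormalPDF
  rw [MeasureTheory.integral_const_mul]
  have : ∀ t : ℝ, Real.exp (-t ^ 2 / 2) = Real.exp (-(1/2) * t ^ 2) := fun t => by ring_nf
  simp_rw [this]
  rw [integral_gaussian]
  rw [show Real.pi / (1/2) = 2 * Real.pi by ring]
  exact inv_mul_cancel₀ sqrt2pi_pos.ne'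

lemma cdf_le_one (z : ℝ) : stdNormalCDF z ≤ 1 := by
  rw [← integral_pdf]
  exact setIntegral_le_integral integrable_pdf (by filter_upwards with t using pdf_nonneg t)

lemma tau_le (z : ℝ) : tau z ≤ max z 0 + 1 := by
  unfold tau
  have h1 : z * stdNormalCDF z ≤ max z 0 := by
    rcases le_or_gt 0 z with hz | hz
    · calc z * stdNormalCDF z ≤ z * 1 := by nlinarith [cdf_le_one z]
      _ = z := mul_one z
      _ ≤ max z 0 := le_max_left z 0
    · calc z * stdNormalCDF z ≤ 0 := by nlinarith [cdf_nonneg z]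
      _ ≤ max z 0 := le_max_right _ _
  linarith [pdf_le_one z]

theorem lemma4_second_part (κ σ z : ℝ) (hκ : 0 < κ) (hσ0 : 0 < σ) (hσ1 : σ ≤ 1)
    (h : κ ≤ σ * tau z) :
    tau (-z) ≤ 1 + Real.sqrt (Real.log (1 / (2 * Real.pi * κ ^ 2))) := by
  have hsq : (0:ℝ) ≤ Real.sqrt (Real.log (1 / (2 * Real.pi * κ ^ 2))) := Real.sqrt_nonneg _
  rcases le_or_gt 0 z with hz | hz
  · -- -z ≤ 0
    have := tau_le (-z)
    have hm : max (-z) 0 = 0 := max_eq_right (by linarith)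
    linarith [hm ▸ this]
  · -- z < 0, so κ ≤ τ(z) ≤ φ(z)
    have htz : 0 < tau z := by nlinarith
    have h1 : κ ≤ tau z := by nlinarith
    have h2 : tau z ≤ stdNormalPDF z := by
      unfold tau; nlinarith [cdf_nonneg z]
    have h3 : κ ≤ (Real.sqrt (2 * Real.pi))⁻¹ * Real.exp (-z ^ 2 / 2) := h1.trans h2
    -- so 2π κ² ≤ exp(-z²), z² ≤ log(1/(2πκ²))
    have h4 : 2 * Real.pi * κ ^ 2 ≤ Real.exp (-z ^ 2) := by
      have hs := sqrt2pi_pos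
      have hsq2 : Real.sqrt (2 * Real.pi) ^ 2 = 2 * Real.pi := Real.sq_sqrt (by positivity)
      have : Real.sqrt (2 * Real.pi) * κ ≤ Real.exp (-z ^ 2 / 2) := by
        rw [inv_mul_eq_div] at h3
        calc Real.sqrt (2 * Real.pi) * κ ≤ Real.sqrt (2*Real.pi) * (Real.exp (-z ^ 2 / 2) / Real.sqrt (2*Real.pi)) := by
              nlinarith
          _ = Real.exp (-z ^ 2 / 2) := by field_simp
      have hexp : Real.exp (-z ^ 2 / 2) * Real.exp (-z ^ 2 / 2) = Real.exp (-z ^ 2) := by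
        rw [← Real.exp_add]; ring_nf
      nlinarith [Real.exp_pos (-z^2/2), mul_pos hs hκ]
    have hC : z ^ 2 ≤ Real.log (1 / (2 * Real.pi * κ ^ 2)) := by
      have hpos : 0 < 2 * Real.pi * κ ^ 2 := by positivity
      have := Real.log_le_log hpos h4
      rw [Real.log_exp] at this
      rw [one_div, Real.log_inv]
      linarith
    have h5 : -z ≤ Real.sqrt (Real.log (1 / (2 * Real.pi * κ ^ 2))) := by
      have : (-z) ^ 2 = z ^ 2 := by ring
      calc -z = Real.sqrt ((-z)^2) := (Real.sqrt_sq (by linarith)).symm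
        _ ≤ _ := Real.sqrt_le_sqrt (by rw [this]; exact hC)
    have := tau_le (-z)
    have hm : max (-z) 0 = -z := max_eq_left (by linarith)
    rw [hm] at this
    linarith
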